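/- Let κ be regular and uncountable. If the product forcing P × P satisfies the κ-chain condition, then forcing with P cannot add a cofinal branch through any tree of height κ lying in the ground model. -/

import Mathlib

theorem aux_rec {c : Ordinal.{0}}
    (hreg : ∀ ξ < c, ∀ f : Ordinal → Ordinal, (∀ ζ < ξ, f ζ < c) →
      Ordinal.blsub.{0,0} ξ (fun ζ _ => f ζ) < c)
    (stepo : Ordinal → Ordinal) (hstep : ∀ η < c, stepo η < c) :
    ∃ B : Ordinal → Ordinal, ∀ ξ < c, B ξ < c ∧ ∀ ζ < ξ, stepo (B ζ) < B ξ := by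
  set B : Ordinal → Ordinal :=
    Ordinal.lt_wf.fix (fun ξ IH => Ordinal.blsub.{0,0} ξ (fun ζ h => stepo (IH ζ h))) with hB
  have hBeq : ∀ ξ, B ξ = Ordinal.blsub.{0,0} ξ (fun ζ _ => stepo (B ζ)) := by
    intro ξ
    rw [hB]
    exact Ordinal.lt_wf.fix_eq _ ξ
  refine ⟨B, ?_⟩
  intro ξ hξ
  induction ξ using Ordinal.lt_wf.induction with
  | _ ξ IH =>
    have hlt : ∀ ζ < ξ, B ζ < c := fun ζ hζ => (IH ζ hζ (hζ.trans hξ)).1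
    have h1 : B ξ < c := by
      rw [hBeq ξ]
      exact hreg ξ hξ (fun ζ => stepo (B ζ)) (fun ζ hζ => hstep _ (hlt ζ hζ))
    refine ⟨h1, fun ζ hζ => ?_⟩
    have := Ordinal.lt_blsub (fun ζ (_ : ζ < ξ) => stepo (B ζ)) ζ hζ
    rwa [← hBeq ξ] at this

/-- Let `κ` be regular uncountable and suppose `P × P` is `κ`-cc.  Then forcing with `P`
cannot add a cofinal branch through a ground-model tree `T` of height `κ`.  The tree is
given with a level function `lev` into the ordinals below `κ`, and a `P`-name `ḃ` for a
cofinal branch of `T` is rendered by a relation `v p α t` ("`p` forces `ḃ(α) = t`")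
satisfying the evident coherence axioms.  The conclusion states that the branch is
(densely) forced to coincide with a branch `g` lying in the ground model. -/
theorem stmt1 {P T : Type} [Preorder P] [PartialOrder T]
    (κ : Cardinal) (hκreg : κ.IsRegular) (hκunc : Cardinal.aleph0 < κ)
    (hcc : ∀ A : Set (P × P),
      (∀ p ∈ A, ∀ q ∈ A, p ≠ q → ¬ ∃ r : P × P, r ≤ p ∧ r ≤ q) → Cardinal.mk A < κ)
    (lev : T → Ordinal) (hlev : ∀ t, lev t < κ.ord)
    (htree : ∀ t : T, ∀ α ≤ lev t, ∃! s : T, s ≤ t ∧ lev s = α)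
    (v : P → Ordinal → T → Prop)
    (hmono : ∀ {p q : P} {α : Ordinal} {t : T}, q ≤ p → v p α t → v q α t)
    (hlevel : ∀ p α t, v p α t → lev t = α)
    (hcoh : ∀ p α β s t, v p α s → v p β t → α ≤ β → s ≤ t)
    (htotal : ∀ p : P, ∀ α < κ.ord, ∃ q ≤ p, ∃ t, v q α t) :
    ∀ p : P, ∃ q ≤ p, ∃ g : Ordinal → T,
      (∀ α < κ.ord, lev (g α) = α) ∧
      (∀ α β : Ordinal, α ≤ β → β < κ.ord → g α ≤ g β) ∧
      (∀ α < κ.ord, ∀ r ≤ q, ∀ t, v r α t → t = g α) := by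
  intro p
  classical
  set c := κ.ord with hcdef
  have hc0 : (0 : Ordinal) < c := Cardinal.lt_ord.mpr (by simpa using hκreg.pos)
  -- uniqueness of nodes below a node at a given level
  have tuniq : ∀ (w s₁ s₂ : T), s₁ ≤ w → s₂ ≤ w → lev s₁ = lev s₂ → lev s₁ ≤ lev w →
      s₁ = s₂ := by
    intro w s₁ s₂ h1 h2 he hle
    obtain ⟨s, -, hu⟩ := htree w (lev s₁) hle
    rw [hu s₁ ⟨h1, rfl⟩, hu s₂ ⟨h2, he.symm⟩]
  by_cases hU : ∃ q, q ≤ p ∧ ∀ α < c, ∀ r₁, r₁ ≤ q → ∀ r₂, r₂ ≤ q →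
      ∀ t₁ t₂, v r₁ α t₁ → v r₂ α t₂ → t₁ = t₂
  · obtain ⟨q, hqp, hu⟩ := hU
    have hch : ∀ α, α < c → ∃ r, r ≤ q ∧ ∃ t, v r α t := fun α h => htotal q α h
    choose r hr t hv using hch
    refine ⟨q, hqp, fun α => if h : α < c then t α h else t 0 hc0, ?_, ?_, ?_⟩
    · intro α h
      simp only [dif_pos h]
      exact hlevel _ _ _ (hv α h)
    · intro α β hab hb
      have ha : α < c := lt_of_le_of_lt hab hb
      simp only [dif_pos ha, dif_pos hb]
      obtain ⟨r', hr', t', hv'⟩ := htotal (r β hb) α ha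
      have h1 : v r' β (t β hb) := hmono hr' (hv β hb)
      have h2 : t' ≤ t β hb := hcoh r' α β t' (t β hb) hv' h1 hab
      have h3 : t' = t α ha :=
        hu α ha r' (le_trans hr' (hr β hb)) (r α ha) (hr α ha) t' (t α ha) hv' (hv α ha)
      rwa [← h3]
    · intro α h rr hrr tt hvv
      simp only [dif_pos h]
      exact hu α h rr hrr (r α h) (hr α h) tt (t α h) hvv (hv α h)
  · exfalso
    -- every q ≤ p has two extensions forcing different values at some level
    have hsplit : ∀ q, q ≤ p → ∃ α, α < c ∧ ∃ u₀, u₀ ≤ q ∧ ∃ u₁, u₁ ≤ q ∧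
        ∃ t₀ t₁, t₀ ≠ t₁ ∧ v u₀ α t₀ ∧ v u₁ α t₁ := by
      intro q hq
      by_contra hno
      apply hU
      refine ⟨q, hq, ?_⟩
      intro α hα r₁ hr₁ r₂ hr₂ t₁ t₂ hv₁ hv₂
      by_contra hne
      exact hno ⟨α, hα, r₁, hr₁, r₂, hr₂, t₁, t₂, hne, hv₁, hv₂⟩
    -- combined step: a common node w at level η plus a split
    have hstep : ∀ η, η < c → ∃ (u₀ u₁ : P) (α : Ordinal) (w t₀ t₁ : T),
        v u₀ η w ∧ v u₁ η w ∧ v u₀ α t₀ ∧ v u₁ α t₁ ∧ t₀ ≠ t₁ ∧ α < c := by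
      intro η hη
      obtain ⟨rη, hrη, w, hw⟩ := htotal p η hη
      obtain ⟨α, hα, u₀, hu₀, u₁, hu₁, t₀, t₁, hne, h0, h1⟩ := hsplit rη hrη
      exact ⟨u₀, u₁, α, w, t₀, t₁, hmono hu₀ hw, hmono hu₁ hw, h0, h1, hne, hα⟩
    choose u₀ u₁ av wv t₀ t₁ hw₀ hw₁ hv₀ hv₁ hne hav using hstep
    set stepo : Ordinal → Ordinal := fun η => if h : η < c then av η h else 0 with hstepo
    have hstepolt : ∀ η < c, stepo η < c := by
      intro η h
      simp only [hstepo, dif_pos h]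
      exact hav η h
    have hreg : ∀ ξ < c, ∀ f : Ordinal → Ordinal, (∀ ζ < ξ, f ζ < c) →
        Ordinal.blsub.{0,0} ξ (fun ζ _ => f ζ) < c := by
      intro ξ hξ f hf
      exact Cardinal.blsub_lt_ord_of_isRegular hκreg (Cardinal.lt_ord.mp hξ)
        (fun ζ hζ => hf ζ hζ)
    obtain ⟨B, hB⟩ := aux_rec hreg stepo hstepolt
    set Pair : Ordinal → P × P :=
      fun ξ => if h : ξ < c then (u₀ (B ξ) (hB ξ h).1, u₁ (B ξ) (hB ξ h).1) else (p, p)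
      with hPair
    have incompat : ∀ ζ ξ, ζ < ξ → ξ < c →
        ¬ ∃ rr : P × P, rr ≤ Pair ζ ∧ rr ≤ Pair ξ := by
      rintro ζ ξ hζξ hξ ⟨⟨s₀, s₁⟩, hrζ, hrξ⟩
      have hζ : ζ < c := hζξ.trans hξ
      have hBζ : B ζ < c := (hB ζ hζ).1
      have hBξ : B ξ < c := (hB ξ hξ).1
      have hlt : av (B ζ) hBζ < B ξ := by
        have := (hB ξ hξ).2 ζ hζξ
        simpa only [hstepo, dif_pos hBζ] using this
      simp only [hPair, dif_pos hζ, dif_pos hξ, Prod.le_def] at hrζ hrξ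
      obtain ⟨hs₀ζ, hs₁ζ⟩ := hrζ
      obtain ⟨hs₀ξ, hs₁ξ⟩ := hrξ
      -- s₀ forces t₀ζ at level α', and w at level B ξ
      have hv0 : v s₀ (av (B ζ) hBζ) (t₀ (B ζ) hBζ) := hmono hs₀ζ (hv₀ (B ζ) hBζ)
      have hv1 : v s₁ (av (B ζ) hBζ) (t₁ (B ζ) hBζ) := hmono hs₁ζ (hv₁ (B ζ) hBζ)
      have hw0 : v s₀ (B ξ) (wv (B ξ) hBξ) := hmono hs₀ξ (hw₀ (B ξ) hBξ)
      have hw1 : v s₁ (B ξ) (wv (B ξ) hBξ) := hmono hs₁ξ (hw₁ (B ξ) hBξ)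
      have hle0 : t₀ (B ζ) hBζ ≤ wv (B ξ) hBξ := hcoh s₀ _ _ _ _ hv0 hw0 hlt.le
      have hle1 : t₁ (B ζ) hBζ ≤ wv (B ξ) hBξ := hcoh s₁ _ _ _ _ hv1 hw1 hlt.le
      have hl0 : lev (t₀ (B ζ) hBζ) = av (B ζ) hBζ := hlevel _ _ _ (hv₀ (B ζ) hBζ)
      have hl1 : lev (t₁ (B ζ) hBζ) = av (B ζ) hBζ := hlevel _ _ _ (hv₁ (B ζ) hBζ)
      have hlw : lev (wv (B ξ) hBξ) = B ξ := hlevel _ _ _ (hw₀ (B ξ) hBξ)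
      exact hne (B ζ) hBζ
        (tuniq _ _ _ hle0 hle1 (hl0.trans hl1.symm) (by rw [hl0, hlw]; exact hlt.le))
    -- build a κ-sized antichain
    set f : c.ToType → P × P := fun x => Pair ((Ordinal.ToType.mk (o := c)).symm x).1 with hf
    have hidx : ∀ x : c.ToType, (((Ordinal.ToType.mk (o := c)).symm x) : Ordinal) < c :=
      fun x => ((Ordinal.ToType.mk (o := c)).symm x).2
    have hfinj : Function.Injective f := by
      intro x y hxy
      by_contra hxyne
      have hne' : (((Ordinal.ToType.mk (o := c)).symm x) : Ordinal) ≠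
          ((Ordinal.ToType.mk (o := c)).symm y : Ordinal) := by
        intro h
        exact hxyne ((Ordinal.ToType.mk (o := c)).symm.injective (Subtype.ext h))
      rcases hne'.lt_or_gt with h | h
      · exact incompat _ _ h (hidx y) ⟨f x, le_refl _, le_of_eq hxy⟩
      · exact incompat _ _ h (hidx x) ⟨f x, le_of_eq hxy, le_refl _⟩
    set A : Set (P × P) := Set.range f with hA
    have hanti : ∀ a ∈ A, ∀ b ∈ A, a ≠ b → ¬ ∃ r : P × P, r ≤ a ∧ r ≤ b := by
      rintro a ⟨x, rfl⟩ b ⟨y, rfl⟩ hab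
      have hne' : (((Ordinal.ToType.mk (o := c)).symm x) : Ordinal) ≠
          ((Ordinal.ToType.mk (o := c)).symm y : Ordinal) := by
        intro h
        exact hab (congrArg Pair h)
      rcases hne'.lt_or_gt with h | h
      · exact incompat _ _ h (hidx y)
      · rintro ⟨rr, h1, h2⟩
        exact incompat _ _ h (hidx x) ⟨rr, h2, h1⟩
    have hAlt : Cardinal.mk A < κ := hcc A hanti
    have hAge : κ ≤ Cardinal.mk A := by
      have : Function.Injective (fun x : c.ToType => (⟨f x, ⟨x, rfl⟩⟩ : A)) := by
        intro x y h
        exact hfinj (congrArg Subtype.val h)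
      calc κ = c.card := (Cardinal.card_ord κ).symm
        _ = Cardinal.mk c.ToType := (Cardinal.mk_toType c).symm
        _ ≤ Cardinal.mk A := Cardinal.mk_le_of_injective this
    exact absurd hAlt (not_lt.mpr hAge)
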